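/- Let σ, τ ⊆ ℝ^{d+e} be convex polytopes, let a ∈ ℝ^d, c ∈ ℝ^e, b ∈ ℝ with (a,c) ≠ 0, and suppose: every vertex of σ lies in (ℝ^d × {0}) ∪ ({0} × ℝ^e) and satisfies (aᵀ,cᵀ)v ≤ b, while every vertex of τ satisfies (aᵀ,cᵀ)w ≥ b; moreover every vertex v of σ with (aᵀ,cᵀ)v = b lies in τ and every vertex w of τ with (aᵀ,cᵀ)w = b lies in σ. Then σ ∩ τ = σ ∩ J = J ∩ τ where J = {x : (aᵀ,cᵀ)x = b}, and σ ∩ τ is a common face of σ and τ. -/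

import Mathlib

open Matrix


section aux

variable {E : Type*} [AddCommGroup E] [Module ℝ E]

lemma hull_le {V : Finset E} (f : E →ₗ[ℝ] ℝ) {b : ℝ} (h : ∀ v ∈ V, f v ≤ b) :
    ∀ x ∈ convexHull ℝ (V : Set E), f x ≤ b := by
  intro x hx
  have : convexHull ℝ (V : Set E) ⊆ {y | f y ≤ b} :=
    convexHull_min (fun v hv => h v hv) (convex_halfSpace_le (f.isLinear) b)
  exact this hx

lemma key_lemma {V W : Finset E} (f : E →ₗ[ℝ] ℝ) {b : ℝ}
    (hle : ∀ v ∈ V, f v ≤ b)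
    (hb : ∀ v ∈ V, f v = b → v ∈ convexHull ℝ (W : Set E))
    {x : E} (hx : x ∈ convexHull ℝ (V : Set E)) (hfx : f x = b) :
    x ∈ convexHull ℝ (W : Set E) := by
  rw [Finset.mem_convexHull'] at hx
  obtain ⟨w, hw0, hw1, hwx⟩ := hx
  -- each vertex with positive weight satisfies f v = b
  have hfb : ∀ v ∈ V, w v * f v = w v * b := by
    have hsum : ∑ v ∈ V, w v * f v = ∑ v ∈ V, w v * b := by
      have : f x = ∑ v ∈ V, w v * f v := by
        rw [← hwx, map_sum]; simp [_root_.map_smul, smul_eq_mul]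
      rw [← this, hfx, ← Finset.sum_mul, hw1, one_mul]
    exact (Finset.sum_eq_sum_iff_of_le (fun v hv =>
      mul_le_mul_of_nonneg_left (hle v hv) (hw0 v hv))).mp hsum
  -- restrict to support
  have hmem : ∀ v ∈ V, w v ≠ 0 → v ∈ convexHull ℝ (W : Set E) := by
    intro v hv hwv
    refine hb v hv ?_
    have := hfb v hv
    exact mul_left_cancel₀ hwv this
  have hconv : Convex ℝ (convexHull ℝ (W : Set E)) := convex_convexHull _ _
  have : ∑ v ∈ V.filter (fun v => w v ≠ 0), w v • v ∈ convexHull ℝ (W : Set E) := by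
    apply hconv.sum_mem
    · intro v hv; exact hw0 v (Finset.mem_filter.mp hv).1
    · rw [← hw1]
      exact Finset.sum_filter_of_ne (fun v _ h hw => h hw)
    · intro v hv
      obtain ⟨hvV, hwv⟩ := Finset.mem_filter.mp hv
      exact hmem v hvV hwv
  rwa [Finset.sum_filter_of_ne (fun v _ h => by
    intro hw; exact h (by rw [hw, zero_smul])), hwx] at this

end aux

section main

variable {E : Type*} [AddCommGroup E] [Module ℝ E]

theorem face_aux (Vσ Vτ : Finset E) (f : E →ₗ[ℝ] ℝ) (b : ℝ)
    (hVσ : ∀ v ∈ Vσ, f v ≤ b) (hVτ : ∀ w ∈ Vτ, b ≤ f w)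
    (hσb : ∀ v ∈ Vσ, f v = b → v ∈ convexHull ℝ (Vτ : Set E))
    (hτb : ∀ w ∈ Vτ, f w = b → w ∈ convexHull ℝ (Vσ : Set E)) :
    convexHull ℝ (Vσ : Set E) ∩ convexHull ℝ ↑Vτ =
      convexHull ℝ ↑Vσ ∩ {x : E | f x = b} ∧
    convexHull ℝ (Vσ : Set E) ∩ {x : E | f x = b} =
      {x : E | f x = b} ∩ convexHull ℝ ↑Vτ ∧
    IsExtreme ℝ (convexHull ℝ (Vσ : Set E)) (convexHull ℝ ↑Vσ ∩ convexHull ℝ ↑Vτ) ∧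
    IsExtreme ℝ (convexHull ℝ (Vτ : Set E)) (convexHull ℝ ↑Vσ ∩ convexHull ℝ ↑Vτ) := by
  have hVτ' : ∀ w ∈ Vτ, (-f) w ≤ -b := fun w hw => by
    simpa using neg_le_neg (hVτ w hw)
  have hτb' : ∀ w ∈ Vτ, (-f) w = -b → w ∈ convexHull ℝ (Vσ : Set E) := fun w hw h => by
    refine hτb w hw ?_
    have : -(f w) = -b := h
    linarith
  have keyσ : ∀ x ∈ convexHull ℝ (Vσ : Set E), f x = b → x ∈ convexHull ℝ (Vτ : Set E) :=
    fun x hx hfx => key_lemma f hVσ hσb hx hfx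
  have keyτ : ∀ x ∈ convexHull ℝ (Vτ : Set E), f x = b → x ∈ convexHull ℝ (Vσ : Set E) :=
    fun x hx hfx => key_lemma (-f) hVτ' hτb' hx (by simp [hfx])
  have hleσ : ∀ x ∈ convexHull ℝ (Vσ : Set E), f x ≤ b := hull_le f hVσ
  have hgeτ : ∀ x ∈ convexHull ℝ (Vτ : Set E), b ≤ f x := fun x hx => by
    have := hull_le (-f) hVτ' x hx
    simp only [LinearMap.neg_apply] at this; linarith
  have eq1 : convexHull ℝ (Vσ : Set E) ∩ convexHull ℝ ↑Vτ =
      convexHull ℝ ↑Vσ ∩ {x : E | f x = b} := by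
    ext x
    constructor
    · rintro ⟨hσ, hτ⟩
      exact ⟨hσ, le_antisymm (hleσ x hσ) (hgeτ x hτ)⟩
    · rintro ⟨hσ, hfx⟩
      exact ⟨hσ, keyσ x hσ hfx⟩
  have eq2 : convexHull ℝ (Vσ : Set E) ∩ {x : E | f x = b} =
      {x : E | f x = b} ∩ convexHull ℝ ↑Vτ := by
    ext x
    constructor
    · rintro ⟨hσ, hfx⟩
      exact ⟨hfx, keyσ x hσ hfx⟩
    · rintro ⟨hfx, hτ⟩
      exact ⟨keyτ x hτ hfx, hfx⟩
  refine ⟨eq1, eq2, ?_, ?_⟩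
  · constructor
    · exact Set.inter_subset_left
    · intro x1 hx1 x2 hx2 x hx hseg
      rw [eq1] at hx
      obtain ⟨hxσ, hfx⟩ := hx
      obtain ⟨t, s, ht, hs, hts, rfl⟩ := hseg
      have hfe : t * f x1 + s * f x2 = b := by
        have : f (t • x1 + s • x2) = t * f x1 + s * f x2 := by
          simp [smul_eq_mul]
        rw [← this]; exact hfx
      have hb' : t * b + s * b = b := by rw [← add_mul, hts, one_mul]
      have hb1 : t * f x1 ≤ t * b := mul_le_mul_of_nonneg_left (hleσ x1 hx1) ht.le
      have hb2 : s * f x2 ≤ s * b := mul_le_mul_of_nonneg_left (hleσ x2 hx2) hs.le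
      have h1 : f x1 = b := le_antisymm (hleσ x1 hx1)
        (le_of_mul_le_mul_left (by linarith) ht)
      have h2 : f x2 = b := le_antisymm (hleσ x2 hx2)
        (le_of_mul_le_mul_left (by linarith) hs)
      rw [eq1]
      exact ⟨hx1, h1⟩
  · constructor
    · exact Set.inter_subset_right
    · intro x1 hx1 x2 hx2 x hx hseg
      rw [eq1, eq2] at hx
      obtain ⟨hfx, hxτ⟩ := hx
      obtain ⟨t, s, ht, hs, hts, rfl⟩ := hseg
      have hfe : t * f x1 + s * f x2 = b := by
        have : f (t • x1 + s • x2) = t * f x1 + s * f x2 := by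
          simp [smul_eq_mul]
        rw [← this]; exact hfx
      have hb' : t * b + s * b = b := by rw [← add_mul, hts, one_mul]
      have hb1 : t * b ≤ t * f x1 := mul_le_mul_of_nonneg_left (hgeτ x1 hx1) ht.le
      have hb2 : s * b ≤ s * f x2 := mul_le_mul_of_nonneg_left (hgeτ x2 hx2) hs.le
      have h1 : f x1 = b := le_antisymm
        (le_of_mul_le_mul_left (by linarith) ht) (hgeτ x1 hx1)
      have h2 : f x2 = b := le_antisymm
        (le_of_mul_le_mul_left (by linarith) hs) (hgeτ x2 hx2)
      rw [eq1, eq2]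
      exact ⟨h1, hx1⟩

end main

/-- If `J = {x : aᵀx₁ + cᵀx₂ = b}` weakly separates the polytopes `σ = conv Vσ` and
`τ = conv Vτ` and the vertices lying on `J` are common to both polytopes, then
`σ ∩ τ = σ ∩ J = J ∩ τ` and `σ ∩ τ` is a common face of `σ` and `τ`. -/
theorem stmt19 {d e : ℕ} (Vσ Vτ : Finset ((Fin d → ℝ) × (Fin e → ℝ)))
    (a : Fin d → ℝ) (c : Fin e → ℝ) (b : ℝ) (hac : ¬(a = 0 ∧ c = 0))
    (hVσsub : ∀ v ∈ Vσ, v.2 = 0 ∨ v.1 = 0)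
    (hVσ : ∀ v ∈ Vσ, a ⬝ᵥ v.1 + c ⬝ᵥ v.2 ≤ b)
    (hVτ : ∀ w ∈ Vτ, b ≤ a ⬝ᵥ w.1 + c ⬝ᵥ w.2)
    (hσb : ∀ v ∈ Vσ, a ⬝ᵥ v.1 + c ⬝ᵥ v.2 = b →
      v ∈ convexHull ℝ (Vτ : Set ((Fin d → ℝ) × (Fin e → ℝ))))
    (hτb : ∀ w ∈ Vτ, a ⬝ᵥ w.1 + c ⬝ᵥ w.2 = b →
      w ∈ convexHull ℝ (Vσ : Set ((Fin d → ℝ) × (Fin e → ℝ)))) :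
    convexHull ℝ (Vσ : Set ((Fin d → ℝ) × (Fin e → ℝ))) ∩ convexHull ℝ ↑Vτ =
      convexHull ℝ ↑Vσ ∩ {x : (Fin d → ℝ) × (Fin e → ℝ) | a ⬝ᵥ x.1 + c ⬝ᵥ x.2 = b} ∧
    convexHull ℝ (Vσ : Set ((Fin d → ℝ) × (Fin e → ℝ))) ∩
        {x : (Fin d → ℝ) × (Fin e → ℝ) | a ⬝ᵥ x.1 + c ⬝ᵥ x.2 = b} =
      {x : (Fin d → ℝ) × (Fin e → ℝ) | a ⬝ᵥ x.1 + c ⬝ᵥ x.2 = b} ∩ convexHull ℝ ↑Vτ ∧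
    IsExtreme ℝ (convexHull ℝ (Vσ : Set ((Fin d → ℝ) × (Fin e → ℝ))))
      (convexHull ℝ ↑Vσ ∩ convexHull ℝ ↑Vτ) ∧
    IsExtreme ℝ (convexHull ℝ (Vτ : Set ((Fin d → ℝ) × (Fin e → ℝ))))
      (convexHull ℝ ↑Vσ ∩ convexHull ℝ ↑Vτ) := by
  let f : ((Fin d → ℝ) × (Fin e → ℝ)) →ₗ[ℝ] ℝ :=
    { toFun := fun x => a ⬝ᵥ x.1 + c ⬝ᵥ x.2
      map_add' := fun x y => by
        simp only [Prod.fst_add, Prod.snd_add, dotProduct_add]; ring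
      map_smul' := fun r x => by
        simp only [Prod.smul_fst, Prod.smul_snd, dotProduct_smul, smul_eq_mul,
          RingHom.id_apply]; ring }
  exact face_aux Vσ Vτ f b hVσ hVτ hσb hτb
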